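/- The threshold A*=(2K√a-3)/(Ka-2√a) satisfies -K<A*<K and A*<1/√a if and only if 1/√a<K<√3/√a. -/
import Mathlib


/-- The threshold `A* = (2K√a - 3)/(Ka - 2√a)` satisfies `-K < A* < K` and
`A* < 1/√a` if and only if `1/√a < K < √3/√a`. -/
theorem stmt_6 (a K : ℝ) (ha : 0 < a) (hK : 0 < K) (hK2 : K ≠ 2 / Real.sqrt a) :
    (-K < (2 * K * Real.sqrt a - 3) / (K * a - 2 * Real.sqrt a) ∧
     (2 * K * Real.sqrt a - 3) / (K * a - 2 * Real.sqrt a) < K ∧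
     (2 * K * Real.sqrt a - 3) / (K * a - 2 * Real.sqrt a) < 1 / Real.sqrt a) ↔
    (1 / Real.sqrt a < K ∧ K < Real.sqrt 3 / Real.sqrt a) := by
  set s := Real.sqrt a with hs_def
  have hs : 0 < s := Real.sqrt_pos.mpr ha
  have hsa : s * s = a := Real.mul_self_sqrt ha.le
  have ht : K * s ≠ 2 := by
    intro h
    apply hK2
    field_simp
    linarith
  have hd : K * a - 2 * s = s * (K * s - 2) := by rw [← hsa]; ring
  have h3pos : 0 < Real.sqrt 3 := Real.sqrt_pos.mpr (by norm_num)
  have h3sq : Real.sqrt 3 * Real.sqrt 3 = 3 := Real.mul_self_sqrt (by norm_num)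
  have h3lt2 : Real.sqrt 3 < 2 := by nlinarith
  constructor
  · rintro ⟨h1, h2, h4⟩
    rcases lt_or_gt_of_ne ht with hlt | hgt
    · have hdneg : K * a - 2 * s < 0 := by rw [hd]; nlinarith
      rw [lt_div_iff_of_neg hdneg] at h1
      rw [div_lt_iff_of_neg hdneg] at h2 h4
      rw [hd] at h1 h2 h4
      have hKa : K * a = K * s * s := by rw [← hsa]; ring
      -- h4 : 1/s * (s * (K*s - 2)) < 2*K*s - 3  gives 1 < K*s
      have he : 1 / s * (s * (K * s - 2)) = K * s - 2 := by field_simp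
      have h4' : K * s - 2 < 2 * K * s - 3 := by rw [he] at h4; exact h4
      have ht1 : 1 < K * s := by linarith
      constructor
      · rw [div_lt_iff₀ hs]; linarith
      · rw [lt_div_iff₀ hs]
        -- from h1 : -K * (s * (K*s-2)) < 2*K*s - 3, i.e. (K*s)^2 < 3
        have hsq : K * s * (K * s) < 3 := by nlinarith
        nlinarith [mul_pos hs hK]
    · -- K*s > 2 : contradiction from h4
      exfalso
      have hdpos : 0 < K * a - 2 * s := by rw [hd]; nlinarith
      rw [div_lt_div_iff₀ hdpos hs] at h4
      rw [hd] at h4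
      nlinarith
  · rintro ⟨h1, h2⟩
    rw [div_lt_iff₀ hs] at h1
    rw [lt_div_iff₀ hs] at h2
    have ht2 : K * s < 2 := lt_trans h2 h3lt2
    have hdneg : K * a - 2 * s < 0 := by rw [hd]; nlinarith
    have hsq : K * s * (K * s) < 3 := by nlinarith
    refine ⟨?_, ?_, ?_⟩
    · rw [lt_div_iff_of_neg hdneg, hd]; nlinarith
    · rw [div_lt_iff_of_neg hdneg, hd]; nlinarith
    · rw [div_lt_iff_of_neg hdneg, hd]
      have he : 1 / s * (s * (K * s - 2)) = K * s - 2 := by field_simp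
      rw [he]; linarith
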